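/- Let κ ≥ μ ≥ 0 and κ̂ ≥ μ̂ ≥ 0 be real numbers with κ > 0, κ̂ > 0, κ̂² + μ̂² = κ² + μ², and κ̂·μ̂ ≤ κ·μ. Define eccentricities ε = √(κ² - μ²)/κ and ε̂ = √(κ̂² - μ̂²)/κ̂. Then ε ≤ ε̂. -/
import Mathlib

theorem eccentricity_comparison
    (κ μ κh μh : ℝ) (h1 : κ ≥ μ) (h2 : μ ≥ 0) (h3 : κh ≥ μh) (h4 : μh ≥ 0)
    (hκ : κ > 0) (hκh : κh > 0)
    (hsum : κh ^ 2 + μh ^ 2 = κ ^ 2 + μ ^ 2) (hprod : κh * μh ≤ κ * μ) :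
    Real.sqrt (κ ^ 2 - μ ^ 2) / κ ≤ Real.sqrt (κh ^ 2 - μh ^ 2) / κh := by
  have hd : κ - μ ≤ κh - μh := by
    have hsq : (κ - μ) ^ 2 ≤ (κh - μh) ^ 2 := by nlinarith
    nlinarith [sq_nonneg (κh - μh + κ - μ), sq_nonneg (κh - μh - κ + μ)]
  have hs : κh + μh ≤ κ + μ := by
    have hsq : (κh + μh) ^ 2 ≤ (κ + μ) ^ 2 := by nlinarith
    nlinarith
  have hμh : μh ≤ μ := by linarith
  have key : (κ ^ 2 - μ ^ 2) * κh ^ 2 ≤ (κh ^ 2 - μh ^ 2) * κ ^ 2 := by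
    nlinarith [mul_le_mul hμh hμh h4 h2, sq_nonneg κ, sq_nonneg κh]
  rw [div_le_div_iff₀ hκ hκh]
  have e1 : Real.sqrt (κ ^ 2 - μ ^ 2) * κh = Real.sqrt ((κ ^ 2 - μ ^ 2) * κh ^ 2) := by
    rw [Real.sqrt_mul' _ (by positivity), Real.sqrt_sq hκh.le]
  have e2 : Real.sqrt (κh ^ 2 - μh ^ 2) * κ = Real.sqrt ((κh ^ 2 - μh ^ 2) * κ ^ 2) := by
    rw [Real.sqrt_mul' _ (by positivity), Real.sqrt_sq hκ.le]
  rw [e1, e2]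
  exact Real.sqrt_le_sqrt key
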